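/- Let S be a finite semigroup, P a nonempty subset of S, and k ≥ 1 an integer such that the setwise products satisfy P^{k+1} = P. Then for every p ∈ P there exist elements s_1, …, s_k, e_1, …, e_k, t of P such that the product e := e_1⋯e_k is idempotent and p = s_1⋯s_k · e · t. -/

import Mathlib

open Pointwise

/-- `spow s n` is the power `s^(n+1)` of `s`, defined in any magma. -/
def spow {S : Type*} [Mul S] (s : S) (n : ℕ) : S := (fun x => x * s)^[n] s

/-- The product `f 0 * f 1 * ⋯ * f (k-1)` of a nonempty finite family in a
semigroup. -/
def finProd {S : Type*} [Mul S] {k : ℕ} (hk : 0 < k) (f : Fin k → S) : S :=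
  (List.ofFn f).tail.foldl (· * ·) (f ⟨0, hk⟩)

lemma spow_zero {S : Type*} [Mul S] (s : S) : spow s 0 = s := rfl

lemma spow_succ {S : Type*} [Mul S] (s : S) (n : ℕ) :
    spow s (n+1) = spow s n * s := Function.iterate_succ_apply' _ _ _

lemma spow_add {S : Type*} [Semigroup S] (s : S) (a b : ℕ) :
    spow s a * spow s b = spow s (a + b + 1) := by
  induction b with
  | zero => rw [spow_zero]; exact (spow_succ s a).symm
  | succ b ih =>
      rw [spow_succ, ← mul_assoc, ih, ← spow_succ]
      congr 1

lemma mem_spow_list {S : Type*} [Mul S] (P : Set S) :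
    ∀ n, ∀ x ∈ spow P n, ∃ (a : S) (l : List S), a ∈ P ∧ (∀ b ∈ l, b ∈ P) ∧
      l.length = n ∧ x = l.foldl (· * ·) a := by
  intro n
  induction n with
  | zero => exact fun x hx => ⟨x, [], hx, by simp, rfl, rfl⟩
  | succ n ih =>
      intro x hx
      rw [spow_succ] at hx
      obtain ⟨y, hy, z, hz, hyz⟩ := Set.mem_mul.1 hx
      obtain ⟨a, l, ha, hl, hlen, hfold⟩ := ih y hy
      refine ⟨a, l ++ [z], ha, ?_, by simp [hlen], ?_⟩
      · intro b hb
        rcases List.mem_append.1 hb with h | h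
        · exact hl b h
        · simp at h; subst h; exact hz
      · rw [List.foldl_append, ← hfold]
        simpa using hyz.symm

lemma exists_finProd {S : Type*} [Mul S] {k : ℕ} (hk : 0 < k) (P : Set S)
    (a : S) (l : List S) (ha : a ∈ P) (hl : ∀ b ∈ l, b ∈ P)
    (hlen : l.length + 1 = k) :
    ∃ f : Fin k → S, (∀ i, f i ∈ P) ∧ finProd hk f = l.foldl (· * ·) a := by
  have hlen' : (a :: l).length = k := by simpa using hlen
  subst hlen'
  refine ⟨(a :: l).get, ?_, ?_⟩
  · intro i
    have hmem : (a :: l).get i ∈ a :: l := List.get_mem (a :: l) i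
    rcases List.mem_cons.1 hmem with h | h
    · rw [h]; exact ha
    · exact hl _ h
  · unfold finProd
    rw [List.ofFn_get]
    rfl

lemma exists_idempotent_spow {S : Type*} [Semigroup S] [Finite S] (d : S) :
    ∃ m, IsIdempotentElem (spow d m) := by
  obtain ⟨i, j, hij, heq⟩ : ∃ i j, i < j ∧ spow d i = spow d j := by
    obtain ⟨i, j, hne, heq⟩ := Finite.exists_ne_map_eq_of_infinite (spow d)
    rcases lt_or_gt_of_ne hne with h | h
    · exact ⟨i, j, h, heq⟩
    · exact ⟨j, i, h, heq.symm⟩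
  set c := j - i with hc_def
  have hc : 1 ≤ c := by omega
  have step : ∀ t, spow d (i + t + c) = spow d (i + t) := by
    intro t
    induction t with
    | zero =>
        rw [show i + 0 + c = j by omega, show i + 0 = i by omega]
        exact heq.symm
    | succ t ih =>
        rw [show i + (t+1) + c = (i + t + c) + 1 by omega, spow_succ, ih,
          ← spow_succ]
        congr 1
  have per : ∀ t s, spow d (i + t + s * c) = spow d (i + t) := by
    intro t s
    induction s with
    | zero => simp
    | succ s ih =>
        rw [Nat.succ_mul, show i + t + (s * c + c) = i + (t + s * c) + c by omega,
          step (t + s * c), show i + (t + s * c) = i + t + s * c by omega, ih]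
  have h1 : 1 ≤ c * (i + 1) := Nat.mul_pos hc (Nat.succ_pos i)
  refine ⟨c * (i + 1) - 1, ?_⟩
  unfold IsIdempotentElem
  rw [spow_add]
  set m := c * (i + 1) - 1 with hm_def
  have hm : m + 1 = c * (i + 1) := by omega
  have hmi : i ≤ m := by
    have : i + 1 ≤ c * (i + 1) := Nat.le_mul_of_pos_left _ hc
    omega
  have key : m + m + 1 = i + (m - i) + (i + 1) * c := by
    rw [Nat.mul_comm (i+1) c]
    omega
  rw [key, per (m - i) (i + 1), show i + (m - i) = m by omega]

/-- If `P` is a nonempty subset of a finite semigroup `S` and `k ≥ 1` is such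
that the setwise power `P^(k+1)` equals `P`, then every `p ∈ P` factorizes as
`p = s₁⋯s_k · e · t` where `e = e₁⋯e_k` is idempotent and all the elements
`s₁, …, s_k, e₁, …, e_k, t` belong to `P`.  (Here `spow P k` is the setwise
power `P^(k+1)`.) -/
theorem factorization_through_idempotent
    {S : Type} [Semigroup S] [Finite S]
    (P : Set S) (hPne : P.Nonempty)
    (k : ℕ) (hk : 1 ≤ k) (hPk : spow P k = P) :
    ∀ p ∈ P, ∃ (s e : Fin k → S) (t : S),
      (∀ i, s i ∈ P) ∧ (∀ i, e i ∈ P) ∧ t ∈ P ∧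
      IsIdempotentElem (finProd hk e) ∧
      p = finProd hk s * finProd hk e * t := by
  intro p hp
  have absorb : ∀ a, spow P (a + k) = spow P a := by
    intro a
    cases a with
    | zero => simpa [spow_zero] using hPk
    | succ b =>
        have h1 : spow P (b + 1 + k) = spow P b * spow P k := by
          rw [spow_add]
          congr 1
          omega
        rw [h1, hPk]
        calc spow P b * P = spow P b * spow P 0 := rfl
          _ = spow P (b + 0 + 1) := spow_add P b 0
          _ = spow P (b + 1) := by congr 1
  have closure : ∀ x y, x ∈ spow P (k-1) → y ∈ spow P (k-1) →
      x * y ∈ spow P (k-1) := by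
    intro x y hx hy
    have h := Set.mul_mem_mul hx hy
    rw [spow_add, show k - 1 + (k - 1) + 1 = (k-1) + k by omega, absorb] at h
    exact h
  have peel : ∀ x ∈ P, ∃ b q, b ∈ spow P (k-1) ∧ q ∈ P ∧ x = b * q := by
    intro x hx
    have hx' : x ∈ spow P (k-1) * spow P 0 := by
      rw [spow_add, show k - 1 + 0 + 1 = k by omega, hPk]
      exact hx
    obtain ⟨b, hb, q, hq, hbq⟩ := Set.mem_mul.1 hx'
    exact ⟨b, q, hb, hq, hbq.symm⟩
  have peel' : ∀ x : {y : S // y ∈ P}, ∃ b q, b ∈ spow P (k-1) ∧ q ∈ P ∧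
      x.1 = b * q := fun x => peel x.1 x.2
  choose B Q hB hQ hEq using peel'
  set Q' : {y : S // y ∈ P} → {y : S // y ∈ P} := fun x => ⟨Q x, hQ x⟩
    with hQ'_def
  set q : ℕ → {y : S // y ∈ P} := fun n => Q'^[n] ⟨p, hp⟩ with hq_def
  have hqs : ∀ n, q (n+1) = Q' (q n) := fun n => Function.iterate_succ_apply' Q' n _
  set c : ℕ → S :=
    fun n => Nat.rec (motive := fun _ => S) (B (q 0))
      (fun m acc => acc * B (q (m+1))) n with hc_def
  have hc0 : c 0 = B (q 0) := rfl
  have hcs : ∀ n, c (n+1) = c n * B (q (n+1)) := fun n => rfl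
  have hcP : ∀ n, c n ∈ spow P (k-1) := by
    intro n
    induction n with
    | zero => rw [hc0]; exact hB _
    | succ n ih => rw [hcs]; exact closure _ _ ih (hB _)
  have hpc : ∀ n, p = c n * (q (n+1)).1 := by
    intro n
    induction n with
    | zero =>
        rw [hqs 0]
        exact hEq (q 0)
    | succ n ih =>
        rw [hqs (n+1)]
        show p = c (n+1) * Q (q (n+1))
        rw [hcs n, mul_assoc, ← hEq (q (n+1))]
        exact ih
  have hshift : ∀ n t, ∃ d ∈ spow P (k-1), c (n + t + 1) = c n * d := by
    intro n t
    induction t with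
    | zero => exact ⟨B (q (n+1)), hB _, by rw [show n+0+1 = n+1 by omega, hcs n]⟩
    | succ t ih =>
        obtain ⟨d, hd, hcd⟩ := ih
        refine ⟨d * B (q (n+t+2)), closure _ _ hd (hB _), ?_⟩
        rw [show n + (t+1) + 1 = (n + t + 1) + 1 by omega, hcs (n + t + 1), hcd, mul_assoc]
  obtain ⟨n, m, hnm, hceq⟩ : ∃ n m, n < m ∧ c n = c m := by
    obtain ⟨a, b, hne, h⟩ := Finite.exists_ne_map_eq_of_infinite c
    rcases lt_or_gt_of_ne hne with hlt | hlt
    · exact ⟨a, b, hlt, h⟩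
    · exact ⟨b, a, hlt, h.symm⟩
  obtain ⟨d, hd, hcd⟩ := hshift n (m - n - 1)
  rw [show n + (m - n - 1) + 1 = m by omega] at hcd
  have hfix : c n * d = c n := by rw [← hcd, ← hceq]
  have hfixpow : ∀ s, c n * spow d s = c n := by
    intro s
    induction s with
    | zero => exact hfix
    | succ s ih => rw [spow_succ, ← mul_assoc, ih]; exact hfix
  have hdpow : ∀ s, spow d s ∈ spow P (k-1) := by
    intro s
    induction s with
    | zero => exact hd
    | succ s ih => rw [spow_succ]; exact closure _ _ ih hd
  obtain ⟨mm, hmm⟩ := exists_idempotent_spow d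
  have hp2 : p = c n * spow d mm * (q (m+1)).1 := by
    rw [hfixpow mm, hceq]
    exact hpc m
  obtain ⟨a1, l1, ha1, hl1, hlen1, hfold1⟩ := mem_spow_list P (k-1) (c n) (hcP n)
  obtain ⟨f, hfP, hf⟩ := exists_finProd hk P a1 l1 ha1 hl1 (by omega)
  obtain ⟨a2, l2, ha2, hl2, hlen2, hfold2⟩ :=
    mem_spow_list P (k-1) (spow d mm) (hdpow mm)
  obtain ⟨g, hgP, hg⟩ := exists_finProd hk P a2 l2 ha2 hl2 (by omega)
  refine ⟨f, g, (q (m+1)).1, hfP, hgP, (q (m+1)).2, ?_, ?_⟩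
  · rw [hg, ← hfold2]
    exact hmm
  · rw [hf, hg, ← hfold1, ← hfold2]
    exact hp2
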